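/- arXiv:1410.6225 — 2 statements merged into one kernel-verified Lean document; each statement's English description precedes it below -/
import Mathlib

section
/- Let A, B, C, D > 0 be real constants and q ∈ (3,5). Then the function g(t) = A t^4 + B t^{q-1} - C t^2 - D has exactly one zero on (0, ∞). -/
/-- For positive reals `A, B, C, D` and `q ∈ (3,5)`, the function
`g t = A * t ^ 4 + B * t ^ (q - 1) - C * t ^ 2 - D` has exactly one zero on `(0, ∞)`. -/
theorem stmt_1 (A B C D q : ℝ) (hA : 0 < A) (hB : 0 < B) (hC : 0 < C) (hD : 0 < D)
    (hq1 : 3 < q) (hq2 : q < 5) :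
    ∃! t : ℝ, 0 < t ∧ A * t ^ (4 : ℕ) + B * t ^ (q - 1) - C * t ^ 2 - D = 0 := by
  set g : ℝ → ℝ := fun t => A * t ^ (4 : ℕ) + B * t ^ (q - 1) - C * t ^ 2 - D with hg
  -- factorization: for s > 0, g s = s^2 * (A s^2 + B s^(q-3) - C - D/s^2)
  have hfact : ∀ s : ℝ, 0 < s →
      g s = s ^ 2 * (A * s ^ 2 + B * s ^ (q - 3) - C - D / s ^ 2) := by
    intro s hs
    have hs2 : (s : ℝ) ^ 2 ≠ 0 := pow_ne_zero 2 hs.ne'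
    have hr : s ^ (q - 3) * s ^ 2 = s ^ (q - 1) := by
      have h2 : (s : ℝ) ^ 2 = s ^ ((2 : ℕ) : ℝ) := (Real.rpow_natCast s 2).symm
      rw [h2, ← Real.rpow_add hs]
      push_cast
      congr 1
      ring
    have hD' : s ^ 2 * (D / s ^ 2) = D := by field_simp
    simp only [hg]
    nlinarith [hr, hD']
  -- the auxiliary function is strictly increasing for positives
  have hmono : ∀ s t : ℝ, 0 < s → s < t →
      A * s ^ 2 + B * s ^ (q - 3) - C - D / s ^ 2 <
      A * t ^ 2 + B * t ^ (q - 3) - C - D / t ^ 2 := by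
    intro s t hs hst
    have ht : 0 < t := hs.trans hst
    have h1 : s ^ 2 < t ^ 2 := by nlinarith
    have h2 : s ^ (q - 3) < t ^ (q - 3) :=
      Real.rpow_lt_rpow hs.le hst (by linarith)
    have h3 : D / t ^ 2 < D / s ^ 2 :=
      div_lt_div_of_pos_left hD (pow_pos hs 2) h1
    nlinarith
  -- existence via IVT
  obtain ⟨c, hc0, hcz⟩ : ∃ c : ℝ, 0 < c ∧ g c = 0 := by
    set t0 : ℝ := min 1 (D / (2 * (A + B))) with ht0def
    have hAB : 0 < A + B := by linarith
    have ht0pos : 0 < t0 := lt_min one_pos (by positivity)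
    have ht0le1 : t0 ≤ 1 := min_le_left _ _
    have ht0le : t0 ≤ D / (2 * (A + B)) := min_le_right _ _
    have hgneg : g t0 < 0 := by
      have h4 : t0 ^ (4 : ℕ) ≤ t0 := by
        calc t0 ^ (4:ℕ) ≤ t0 ^ 1 := pow_le_pow_of_le_one ht0pos.le ht0le1 (by norm_num)
        _ = t0 := pow_one t0
      have hr : t0 ^ (q - 1) ≤ t0 := by
        calc t0 ^ (q - 1) ≤ t0 ^ (1 : ℝ) :=
              Real.rpow_le_rpow_of_exponent_ge ht0pos ht0le1 (by linarith)
        _ = t0 := Real.rpow_one t0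
      have hABt : (A + B) * t0 ≤ D / 2 := by
        have := mul_le_mul_of_nonneg_left ht0le hAB.le
        calc (A + B) * t0 ≤ (A + B) * (D / (2 * (A + B))) := this
        _ = D / 2 := by field_simp
      have hC2 : 0 < C * t0 ^ 2 := by positivity
      simp only [hg]
      nlinarith [mul_le_mul_of_nonneg_left h4 hA.le, mul_le_mul_of_nonneg_left hr hB.le]
    set t1 : ℝ := max 1 (Real.sqrt ((C + D + 1) / A)) with ht1def
    have ht1ge1 : (1 : ℝ) ≤ t1 := le_max_left _ _
    have ht1pos : 0 < t1 := lt_of_lt_of_le one_pos ht1ge1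
    have hgpos : 0 < g t1 := by
      have hsq : (C + D + 1) / A ≤ t1 ^ 2 := by
        have := le_max_right 1 (Real.sqrt ((C + D + 1) / A))
        have h := Real.sq_sqrt (by positivity : (0:ℝ) ≤ (C + D + 1) / A)
        nlinarith [Real.sqrt_nonneg ((C + D + 1) / A)]
      have hAt : C + D + 1 ≤ A * t1 ^ 2 := by
        rw [div_le_iff₀ hA] at hsq; linarith [hsq]
      have hr : 0 < t1 ^ (q - 1) := Real.rpow_pos_of_pos ht1pos _
      have h12 : 1 ≤ t1 ^ 2 := by nlinarith
      simp only [hg]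
      have h44 : t1 ^ (4 : ℕ) = t1 ^ 2 * t1 ^ 2 := by ring
      nlinarith [mul_le_mul_of_nonneg_right hAt (by positivity : (0:ℝ) ≤ t1 ^ 2)]
    have ht01 : t0 ≤ t1 := ht0le1.trans ht1ge1
    have hcont : ContinuousOn g (Set.Icc t0 t1) := by
      apply ContinuousOn.sub
      apply ContinuousOn.sub
      apply ContinuousOn.add
      · exact (continuous_const.mul (continuous_pow 4)).continuousOn
      · apply ContinuousOn.mul continuousOn_const
        intro x hx
        exact (Real.continuousAt_rpow_const x (q-1)
          (Or.inl (ne_of_gt (lt_of_lt_of_le ht0pos hx.1)))).continuousWithinAt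
      · exact (continuous_const.mul (continuous_pow 2)).continuousOn
      · exact continuousOn_const
    have := intermediate_value_Icc ht01 hcont
    have h0mem : (0 : ℝ) ∈ Set.Icc (g t0) (g t1) := ⟨hgneg.le, hgpos.le⟩
    obtain ⟨c, hcmem, hcz⟩ := this h0mem
    exact ⟨c, lt_of_lt_of_le ht0pos hcmem.1, hcz⟩
  refine ⟨c, ⟨hc0, hcz⟩, ?_⟩
  rintro y ⟨hy0, hyz⟩
  -- uniqueness
  by_contra hne
  have hkey : ∀ s t : ℝ, 0 < s → s < t → g s = 0 → g t = 0 → False := by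
    intro s t hs hst hgs hgt
    have ht : 0 < t := hs.trans hst
    have hhs : A * s ^ 2 + B * s ^ (q - 3) - C - D / s ^ 2 = 0 := by
      have h := hfact s hs
      rw [hgs] at h
      exact (mul_eq_zero.mp h.symm).resolve_left (pow_ne_zero 2 hs.ne')
    have hht : A * t ^ 2 + B * t ^ (q - 3) - C - D / t ^ 2 = 0 := by
      have h := hfact t ht
      rw [hgt] at h
      exact (mul_eq_zero.mp h.symm).resolve_left (pow_ne_zero 2 ht.ne')
    have := hmono s t hs hst
    rw [hhs, hht] at this
    exact lt_irrefl 0 this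
  rcases lt_trichotomy y c with h | h | h
  · exact hkey y c hy0 h hyz hcz
  · exact hne h
  · exact hkey c y hc0 h hcz hyz
end

section
/- Let a, b, cₙ be sequences of reals with a > 0 fixed, b > 0 fixed, tₙ ≥ 0 satisfying (a)tₙ + (b)tₙ³ = λ tₙ⁵ + 2βₙ tₙ^q with λ > 0, q > 3, βₙ → ∞ and tₙ > 0 for each n. Then tₙ → 0 and βₙ tₙ^{q-1} is bounded. -/
open Filter

/-- If `a, b, λ > 0`, `q > 3`, `βₙ → ∞`, `tₙ > 0` and
`a tₙ + b tₙ³ = λ tₙ⁵ + 2 βₙ tₙ^q` for every `n`, then `tₙ → 0` and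
`βₙ tₙ^{q-1}` is bounded. -/
theorem stmt_8 (a b lam q : ℝ) (ha : 0 < a) (hb : 0 < b) (hlam : 0 < lam) (hq : 3 < q)
    (β t : ℕ → ℝ) (hβ : Tendsto β atTop atTop) (hβpos : ∀ n, 0 < β n)
    (ht : ∀ n, 0 < t n)
    (heq : ∀ n, a * t n + b * t n ^ 3 = lam * t n ^ 5 + 2 * β n * t n ^ q) :
    Tendsto t atTop (nhds 0) ∧ ∃ M : ℝ, ∀ n, β n * t n ^ (q - 1) ≤ M := by
  set T : ℝ := max 1 (Real.sqrt ((a + b) / lam)) with hT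
  have hT1 : (1 : ℝ) ≤ T := le_max_left _ _
  have hTpos : 0 < T := lt_of_lt_of_le one_pos hT1
  -- t n ≤ T
  have htT : ∀ n, t n ≤ T := by
    intro n
    by_cases h1 : t n ≤ 1
    · exact h1.trans hT1
    · push_neg at h1
      have hrpow : (0:ℝ) < t n ^ q := Real.rpow_pos_of_pos (ht n) q
      have hβt : 0 < 2 * β n * t n ^ q :=
        mul_pos (mul_pos two_pos (hβpos n)) hrpow
      have h5 : lam * t n ^ 5 ≤ a * t n + b * t n ^ 3 := by nlinarith [heq n]
      have hcube : t n ≤ t n ^ 3 := by nlinarith [mul_pos (ht n) (mul_pos (sub_pos.mpr h1) (by linarith : (0:ℝ) < t n + 1))]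
      have hsq : t n ^ 2 ≤ (a + b) / lam := by
        rw [le_div_iff₀ hlam]
        nlinarith [h5, hcube, pow_pos (ht n) 3, ht n]
      have : t n ≤ Real.sqrt ((a + b) / lam) := by
        have := Real.sqrt_le_sqrt hsq
        rwa [Real.sqrt_sq (ht n).le] at this
      exact this.trans (le_max_right _ _)
  have hCpos : (0:ℝ) < a + b * T ^ 2 := by positivity
  -- key bound : β n * t n ^ (q-1) ≤ (a + b T²) / 2
  have hkey : ∀ n, β n * t n ^ (q - 1) ≤ (a + b * T ^ 2) / 2 := by
    intro n
    have hsplit : t n ^ q = t n ^ (q - 1) * t n := by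
      rw [← Real.rpow_add_one (ht n).ne' (q - 1), sub_add_cancel]
    have ht2 : t n ^ 2 ≤ T ^ 2 := by nlinarith [htT n, ht n]
    have hb3 : b * t n ^ 3 ≤ b * T ^ 2 * t n := by
      nlinarith [mul_nonneg (sub_nonneg.mpr ht2) (ht n).le, hb.le]
    have h5 : (0:ℝ) < lam * t n ^ 5 := mul_pos hlam (pow_pos (ht n) 5)
    have hlin : 2 * β n * (t n ^ (q - 1) * t n) ≤ (a + b * T ^ 2) * t n := by
      rw [← hsplit]
      linarith [heq n]
    have h2 : (2 * (β n * t n ^ (q - 1))) * t n ≤ (a + b * T ^ 2) * t n := by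
      linarith [hlin]
    have := (mul_le_mul_iff_of_pos_right (ht n)).mp h2
    linarith
  have hq1 : (0:ℝ) < q - 1 := by linarith
  refine ⟨?_, (a + b * T ^ 2) / 2, hkey⟩
  -- tendsto
  have hub : ∀ n, t n ≤ ((a + b * T ^ 2) / 2 / β n) ^ (1 / (q - 1)) := by
    intro n
    have h1 : t n ^ (q - 1) ≤ (a + b * T ^ 2) / 2 / β n := by
      rw [le_div_iff₀ (hβpos n)]
      linarith [hkey n, mul_comm (β n) (t n ^ (q - 1))]
    have h2 := Real.rpow_le_rpow (Real.rpow_nonneg (ht n).le _) h1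
      (by positivity : (0:ℝ) ≤ 1 / (q - 1))
    have h3 : (t n ^ (q - 1)) ^ (1 / (q - 1)) = t n := by
      rw [← Real.rpow_mul (ht n).le, mul_one_div, div_self hq1.ne', Real.rpow_one]
    rwa [h3] at h2
  have hlim : Tendsto (fun n => ((a + b * T ^ 2) / 2 / β n) ^ (1 / (q - 1))) atTop (nhds 0) := by
    have h0 : Tendsto (fun n => (a + b * T ^ 2) / 2 / β n) atTop (nhds 0) :=
      Tendsto.div_atTop tendsto_const_nhds hβ
    have := h0.rpow_const (p := 1 / (q - 1)) (Or.inr (by positivity))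
    rwa [Real.zero_rpow (by positivity : (0:ℝ) < 1 / (q-1)).ne'] at this
  exact tendsto_of_tendsto_of_tendsto_of_le_of_le tendsto_const_nhds hlim
    (fun n => (ht n).le) hub
end
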